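/- In the structure R₁, for every ordinal α the class of all ordinals is isomorphic to the final segment [α+1, ∞) via translation: for all ordinals ξ, η, ξ ≤₁ η holds if and only if α+1+ξ ≤₁ α+1+η holds. -/

import Mathlib

open Ordinal

noncomputable section

/-- The least epsilon number: the least fixed point of `ξ ↦ ω ^ ξ`. -/
def eps0 : Ordinal := sInf {ξ : Ordinal | Ordinal.omega0 ^ ξ = ξ}

namespace R1

/-- Terms of the language `{≤, ≤₁}`: variables and parameters. -/
inductive Trm : Type 1 where
  | evar : ℕ → Trm
  | cst  : Ordinal → Trm

def Trm.val (v : ℕ → Ordinal) : Trm → Ordinal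
  | .evar n => v n
  | .cst c  => c

/-- Quantifier-free formulas in the language `{≤, ≤₁}`. -/
inductive QF : Type 1 where
  | le  : Trm → Trm → QF
  | le1 : Trm → Trm → QF
  | not : QF → QF
  | and : QF → QF → QF
  | or  : QF → QF → QF

def QF.eval (r1 : Ordinal → Ordinal → Prop) (v : ℕ → Ordinal) : QF → Prop
  | .le s t  => s.val v ≤ t.val v
  | .le1 s t => r1 (s.val v) (t.val v)
  | .not φ   => ¬ φ.eval r1 v
  | .and φ ψ => φ.eval r1 v ∧ ψ.eval r1 v
  | .or φ ψ  => φ.eval r1 v ∨ ψ.eval r1 v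

def Trm.CstBelow (δ : Ordinal) : Trm → Prop
  | .cst c  => c < δ
  | .evar _ => True

def QF.CstBelow (δ : Ordinal) : QF → Prop
  | .le s t  => s.CstBelow δ ∧ t.CstBelow δ
  | .le1 s t => s.CstBelow δ ∧ t.CstBelow δ
  | .not φ   => φ.CstBelow δ
  | .and φ ψ => φ.CstBelow δ ∧ ψ.CstBelow δ
  | .or φ ψ  => φ.CstBelow δ ∧ ψ.CstBelow δ

/-- Satisfaction of a Σ₁-formula (existential block in front of a
quantifier-free formula) in the segment of ordinals `< δ`. -/
def Sat (r1 : Ordinal → Ordinal → Prop) (δ : Ordinal) (φ : QF) : Prop :=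
  ∃ v : ℕ → Ordinal, (∀ n, v n < δ) ∧ φ.eval r1 v

/-- `(α; ≤, ≤₁)` is a Σ₁-elementary substructure of `(β; ≤, ≤₁)`. -/
def Sig1Elem (r1 : Ordinal → Ordinal → Prop) (α β : Ordinal) : Prop :=
  ∀ φ : QF, φ.CstBelow α → (Sat r1 α φ ↔ Sat r1 β φ)

/-- The recursive (in `β`) definition of `α ≤₁ β` in `R₁`. -/
noncomputable def leAux : Ordinal → Ordinal → Prop :=
  WellFounded.fix Ordinal.lt_wf fun β IH α =>
    α ≤ β ∧ Sig1Elem (fun x y => ∃ h : y < β, IH y h x) α β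

/-- `α ≤₁ β` in the structure `R₁`. -/
def le1 (α β : Ordinal) : Prop := leAux β α

def lt1 (α β : Ordinal) : Prop := le1 α β ∧ α < β

end R1

namespace R1


/-- Satisfaction using the global `le1` relation. -/
def Sat' (δ : Ordinal) (φ : QF) : Prop :=
  ∃ v : ℕ → Ordinal, (∀ n, v n < δ) ∧ φ.eval le1 v

theorem Trm.cstBelow_mono {γ δ : Ordinal} (h : γ ≤ δ) :
    ∀ {t : Trm}, t.CstBelow γ → t.CstBelow δ
  | .evar _, _ => trivial
  | .cst _, hc => lt_of_lt_of_le hc h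

theorem QF.cstBelow_mono {γ δ : Ordinal} (h : γ ≤ δ) :
    ∀ {φ : QF}, φ.CstBelow γ → φ.CstBelow δ := by
  intro φ
  induction φ with
  | le s t => exact fun ⟨h1, h2⟩ => ⟨Trm.cstBelow_mono h h1, Trm.cstBelow_mono h h2⟩
  | le1 s t => exact fun ⟨h1, h2⟩ => ⟨Trm.cstBelow_mono h h1, Trm.cstBelow_mono h h2⟩
  | not φ ih => exact fun h1 => ih h1
  | and φ ψ ih1 ih2 => exact fun ⟨h1, h2⟩ => ⟨ih1 h1, ih2 h2⟩
  | or φ ψ ih1 ih2 => exact fun ⟨h1, h2⟩ => ⟨ih1 h1, ih2 h2⟩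

theorem Trm.val_lt {δ : Ordinal} {v : ℕ → Ordinal} (hv : ∀ n, v n < δ) :
    ∀ {t : Trm}, t.CstBelow δ → t.val v < δ
  | .evar n, _ => hv n
  | .cst _, hc => hc

theorem evalCongr {r r' : Ordinal → Ordinal → Prop} {δ : Ordinal} {v : ℕ → Ordinal}
    (hv : ∀ n, v n < δ) (h : ∀ x y, x < δ → y < δ → (r x y ↔ r' x y)) :
    ∀ {φ : QF}, φ.CstBelow δ → (φ.eval r v ↔ φ.eval r' v) := by
  intro φ
  induction φ with
  | le s t => exact fun _ => Iff.rfl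
  | le1 s t => exact fun ⟨h1, h2⟩ => h _ _ (Trm.val_lt hv h1) (Trm.val_lt hv h2)
  | not φ ih => exact fun h1 => not_congr (ih h1)
  | and φ ψ ih1 ih2 => exact fun ⟨h1, h2⟩ => and_congr (ih1 h1) (ih2 h2)
  | or φ ψ ih1 ih2 => exact fun ⟨h1, h2⟩ => or_congr (ih1 h1) (ih2 h2)

theorem le1_def (γ δ : Ordinal) :
    le1 γ δ ↔ γ ≤ δ ∧ Sig1Elem (fun x y => ∃ _ : y < δ, le1 x y) γ δ := by
  unfold le1 leAux
  rw [WellFounded.fix_eq]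

theorem sat_bridge {δ δ' : Ordinal} (hδ : δ' ≤ δ) {φ : QF} (hφ : φ.CstBelow δ') :
    Sat (fun x y => ∃ _ : y < δ, le1 x y) δ' φ ↔ Sat' δ' φ := by
  refine exists_congr fun v => and_congr_right fun hv => ?_
  exact evalCongr hv (fun x y _ hy =>
    ⟨fun ⟨_, h⟩ => h, fun h => ⟨lt_of_lt_of_le hy hδ, h⟩⟩) hφ

theorem le1_iff (γ δ : Ordinal) :
    le1 γ δ ↔ γ ≤ δ ∧ ∀ φ : QF, φ.CstBelow γ → (Sat' γ φ ↔ Sat' δ φ) := by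
  rw [le1_def]
  refine and_congr_right fun hγδ => forall_congr' fun φ => forall_congr' fun hφ => ?_
  rw [sat_bridge hγδ hφ, sat_bridge le_rfl (QF.cstBelow_mono hγδ hφ)]

theorem Sat'.mono {γ δ : Ordinal} (h : γ ≤ δ) {φ : QF} : Sat' γ φ → Sat' δ φ :=
  fun ⟨v, hv, he⟩ => ⟨v, fun n => lt_of_lt_of_le (hv n) h, he⟩

theorem le1_iff' (γ δ : Ordinal) :
    le1 γ δ ↔ γ ≤ δ ∧ ∀ φ : QF, φ.CstBelow γ → Sat' δ φ → Sat' γ φ := by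
  rw [le1_iff]
  refine and_congr_right fun hγδ => forall_congr' fun φ => forall_congr' fun hφ => ?_
  exact ⟨fun h => h.mpr, fun h => ⟨Sat'.mono hγδ, h⟩⟩

theorem le1_le {γ δ : Ordinal} (h : le1 γ δ) : γ ≤ δ := ((le1_iff γ δ).mp h).1

theorem le1_refl (γ : Ordinal) : le1 γ γ :=
  (le1_iff γ γ).mpr ⟨le_rfl, fun _ _ => Iff.rfl⟩

theorem le1_trans {a b c : Ordinal} (h1 : le1 a b) (h2 : le1 b c) : le1 a c := by
  rw [le1_iff'] at *
  exact ⟨h1.1.trans h2.1, fun φ hφ hs =>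
    h1.2 φ hφ (h2.2 φ (QF.cstBelow_mono h1.1 hφ) hs)⟩

theorem le1_down {a b c : Ordinal} (h : le1 a c) (hab : a ≤ b) (hbc : b ≤ c) : le1 a b := by
  rw [le1_iff'] at *
  exact ⟨hab, fun φ hφ hs => h.2 φ hφ (hs.mono hbc)⟩


-- continuation, inside namespace R1
def Trm.mv : Trm → ℕ
  | .evar n => n
  | .cst _ => 0

def QF.mv : QF → ℕ
  | .le s t => max s.mv t.mv
  | .le1 s t => max s.mv t.mv
  | .not φ => φ.mv
  | .and φ ψ => max φ.mv ψ.mv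
  | .or φ ψ => max φ.mv ψ.mv

theorem Trm.val_ext {v w : ℕ → Ordinal} :
    ∀ {t : Trm}, (∀ n, n ≤ t.mv → v n = w n) → t.val v = t.val w
  | .evar n, h => h n le_rfl
  | .cst _, _ => rfl

theorem QF.eval_ext {r : Ordinal → Ordinal → Prop} {v w : ℕ → Ordinal} :
    ∀ {φ : QF}, (∀ n, n ≤ φ.mv → v n = w n) → (φ.eval r v ↔ φ.eval r w) := by
  intro φ
  induction φ with
  | le s t => intro h
              rw [QF.eval, QF.eval,
                Trm.val_ext (fun n hn => h n (le_trans hn (le_max_left _ _))),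
                Trm.val_ext (fun n hn => h n (le_trans hn (le_max_right _ _)))]
  | le1 s t => intro h
               rw [QF.eval, QF.eval,
                 Trm.val_ext (fun n hn => h n (le_trans hn (le_max_left _ _))),
                 Trm.val_ext (fun n hn => h n (le_trans hn (le_max_right _ _)))]
  | not φ ih => exact fun h => not_congr (ih h)
  | and φ ψ ih1 ih2 =>
      exact fun h => and_congr (ih1 fun n hn => h n (le_trans hn (le_max_left _ _)))
        (ih2 fun n hn => h n (le_trans hn (le_max_right _ _)))
  | or φ ψ ih1 ih2 =>
      exact fun h => or_congr (ih1 fun n hn => h n (le_trans hn (le_max_left _ _)))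
        (ih2 fun n hn => h n (le_trans hn (le_max_right _ _)))

/-- Continuity: `≤₁` to a limit follows from `≤₁` to all smaller ordinals. -/
theorem le1_of_limit {a l : Ordinal} (hl : Order.IsSuccLimit l) (ha : a < l)
    (h : ∀ b, a ≤ b → b < l → le1 a b) : le1 a l := by
  rw [le1_iff']
  refine ⟨le_of_lt ha, fun φ hφ ⟨v, hv, he⟩ => ?_⟩
  set N := φ.mv with hN
  set M : Ordinal := (Finset.range (N + 1)).sup (fun n => v n + 1) with hM
  have hMl : M < l := by
    refine Finset.sup_lt_iff (by simpa using hl.pos) |>.mpr fun n _ => ?_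
    rw [Ordinal.add_one_eq_succ]
    exact hl.succ_lt (hv n)
  set b : Ordinal := max a M with hb
  have hbl : b < l := max_lt ha hMl
  set v' : ℕ → Ordinal := fun n => if n ≤ N then v n else 0 with hv'
  have hv'b : ∀ n, v' n < b := by
    intro n
    have h0 : v 0 + 1 ≤ M := Finset.le_sup (f := fun n => v n + 1) (Finset.mem_range.mpr (Nat.succ_pos N))
    by_cases hn : n ≤ N
    · have : v n + 1 ≤ M := Finset.le_sup (f := fun n => v n + 1) (Finset.mem_range.mpr (Nat.lt_succ_of_le hn))
      simp only [hv', if_pos hn]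
      exact lt_of_lt_of_le (lt_of_lt_of_le (lt_add_one _) this) (le_max_right _ _)
    · simp only [hv', if_neg hn]
      calc (0 : Ordinal) < v 0 + 1 := by
            exact lt_of_le_of_lt (zero_le (a := v 0)) (lt_add_one _)
        _ ≤ M := h0
        _ ≤ b := le_max_right _ _
  have he' : φ.eval le1 v' := by
    rw [QF.eval_ext (r := le1) (w := v) (fun n hn => by simp [hv', show n ≤ N from hn])]
    exact he
  have hb' : Sat' b φ := ⟨v', hv'b, he'⟩
  have hab : le1 a b := h b (le_max_left _ _) hbl
  exact ((le1_iff' a b).mp hab).2 φ hφ hb'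

/-- If `a <₁ b` then `a` is a limit ordinal. -/
theorem isLimit_of_lt1 {a b : Ordinal} (h : le1 a b) (hab : a < b) : Order.IsSuccLimit a := by
  rcases Ordinal.zero_or_succ_or_isSuccLimit a with h0 | ⟨c, hc⟩ | hl
  · exfalso
    subst h0
    have := ((le1_iff' 0 b).mp h).2 (.le (.evar 0) (.evar 0)) ⟨trivial, trivial⟩
      ⟨fun _ => 0, fun _ => hab, le_rfl⟩
    obtain ⟨v, hv, _⟩ := this
    exact absurd (hv 0) (by simp)
  · exfalso
    have hca : c < a := by rw [← hc]; exact Order.lt_succ c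
    have := ((le1_iff' a b).mp h).2 (.not (.le (.evar 0) (.cst c))) ⟨trivial, hca⟩
      ⟨fun _ => a, fun _ => hab, by
        show ¬ (a ≤ c)
        exact not_le.mpr hca⟩
    obtain ⟨v, hv, hev⟩ := this
    have : v 0 < a := hv 0
    rw [← hc, Order.lt_succ_iff] at this
    exact hev this
  · exact hl

-- Part 3: translation machinery
theorem sub_add' {α c : Ordinal} (h : ¬ c ≤ α) : α + 1 + (c - (α + 1)) = c := by
  refine Ordinal.add_sub_cancel_of_le ?_
  rw [Ordinal.add_one_eq_succ, Order.succ_le_iff]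
  exact not_le.mp h

theorem le_f {α x b : Ordinal} (hx : x ≤ α) : x ≤ α + 1 + b :=
  le_trans (le_trans hx (le_of_lt (lt_add_one α))) (le_self_add)

theorem lt_f {α x b : Ordinal} (hx : x ≤ α) : x < α + 1 + b :=
  lt_of_le_of_lt hx (lt_of_lt_of_le (lt_add_one α) (le_self_add))

/-- Translate a "moved" term (value `≥ α+1`) back by `α+1`. -/
def tτ (α : Ordinal) : Trm → Trm
  | .cst c => .cst (c - (α + 1))
  | .evar n => .evar n

def QF.TT : QF := .le (.evar 0) (.evar 0)
def QF.FF : QF := .not QF.TT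

theorem eval_TT (r : Ordinal → Ordinal → Prop) (z : ℕ → Ordinal) : QF.TT.eval r z := le_rfl

theorem eval_FF (r : Ordinal → Ordinal → Prop) (z : ℕ → Ordinal) : ¬ QF.FF.eval r z :=
  fun h => h (eval_TT r z)

theorem TT_cstBelow {δ : Ordinal} : QF.TT.CstBelow δ := ⟨trivial, trivial⟩
theorem FF_cstBelow {δ : Ordinal} : QF.FF.CstBelow δ := TT_cstBelow

open Classical in
/-- The translated formula over the structure `ξ`/`η`. -/
noncomputable def Tr (α ξ : Ordinal) (v : ℕ → Ordinal) : QF → QF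
  | .le s t =>
    if s.val v ≤ α then
      if t.val v ≤ α then (if s.val v ≤ t.val v then QF.TT else QF.FF)
      else QF.TT
    else
      if t.val v ≤ α then QF.FF
      else .le (tτ α s) (tτ α t)
  | .le1 s t =>
    if s.val v ≤ α then
      if t.val v ≤ α then (if le1 (s.val v) (t.val v) then QF.TT else QF.FF)
      else
        if ∀ w, w < ξ → le1 (s.val v) (α + 1 + w) then QF.TT
        else .not (.le (.cst (sInf {w | ¬ le1 (s.val v) (α + 1 + w)})) (tτ α t))
    else
      if t.val v ≤ α then QF.FF
      else .le1 (tτ α s) (tτ α t)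
  | .not φ => .not (Tr α ξ v φ)
  | .and φ ψ => .and (Tr α ξ v φ) (Tr α ξ v ψ)
  | .or φ ψ => .or (Tr α ξ v φ) (Tr α ξ v ψ)

open Classical in
noncomputable def liftv (α : Ordinal) (v z : ℕ → Ordinal) : ℕ → Ordinal :=
  fun n => if v n ≤ α then v n else α + 1 + z n

theorem val_lift_kept (α : Ordinal) (v z : ℕ → Ordinal) :
    ∀ {t : Trm}, t.val v ≤ α → t.val (liftv α v z) = t.val v
  | .cst _, _ => rfl
  | .evar _, h => if_pos h

theorem val_lift_moved (α : Ordinal) (v z : ℕ → Ordinal) :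
    ∀ {t : Trm}, ¬ t.val v ≤ α → t.val (liftv α v z) = α + 1 + (tτ α t).val z
  | .cst _, h => (sub_add' h).symm
  | .evar _, h => if_neg h

theorem val_tt_lt (α : Ordinal) {ξ η : Ordinal} (v z : ℕ → Ordinal) (hz : ∀ n, z n < η)
    (hξη : ξ ≤ η) : ∀ {t : Trm}, ¬ t.val v ≤ α → t.CstBelow (α + 1 + ξ) → (tτ α t).val z < η
  | .cst c, h, hc => by
      have h' : ¬ c ≤ α := h
      have hc' : c < α + 1 + ξ := hc
      have h1 : α + 1 + (c - (α + 1)) = c := sub_add' h'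
      have h2 : c - (α + 1) < ξ := by
        rw [← add_lt_add_iff_left (α + 1), h1]; exact hc'
      exact lt_of_lt_of_le h2 hξη
  | .evar n, _, _ => hz n

theorem tτ_cstBelow (α : Ordinal) {ξ : Ordinal} (v : ℕ → Ordinal) :
    ∀ {t : Trm}, ¬ t.val v ≤ α → t.CstBelow (α + 1 + ξ) → (tτ α t).CstBelow ξ
  | .cst c, h, hc => by
      have h' : ¬ c ≤ α := h
      have hc' : c < α + 1 + ξ := hc
      show c - (α + 1) < ξ
      rw [← add_lt_add_iff_left (α + 1), sub_add' h']; exact hc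
  | .evar _, _, _ => trivial

theorem Tr_cstBelow {α ξ : Ordinal} (v : ℕ → Ordinal) :
    ∀ {φ : QF}, φ.CstBelow (α + 1 + ξ) → (Tr α ξ v φ).CstBelow ξ := by
  intro φ
  induction φ with
  | le s t =>
    rintro ⟨hs', ht'⟩
    by_cases h1 : s.val v ≤ α <;> by_cases h2 : t.val v ≤ α <;>
      simp only [Tr, if_pos, if_neg, h1, h2, if_true, if_false]
    · by_cases h3 : s.val v ≤ t.val v
      · rw [if_pos h3]; exact TT_cstBelow
      · rw [if_neg h3]; exact FF_cstBelow
    · exact TT_cstBelow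
    · exact FF_cstBelow
    · exact ⟨tτ_cstBelow α v h1 hs', tτ_cstBelow α v h2 ht'⟩
  | le1 s t =>
    rintro ⟨hs', ht'⟩
    by_cases h1 : s.val v ≤ α <;> by_cases h2 : t.val v ≤ α <;>
      simp only [Tr, if_pos, if_neg, h1, h2, if_true, if_false]
    · by_cases h3 : le1 (s.val v) (t.val v)
      · rw [if_pos h3]; exact TT_cstBelow
      · rw [if_neg h3]; exact FF_cstBelow
    · by_cases h4 : ∀ w, w < ξ → le1 (s.val v) (α + 1 + w)
      · rw [if_pos h4]; exact TT_cstBelow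
      · rw [if_neg h4]
        refine ⟨?_, tτ_cstBelow α v h2 ht'⟩
        push_neg at h4
        obtain ⟨w₀, hw₀ξ, hw₀⟩ := h4
        exact lt_of_le_of_lt (csInf_le' hw₀) hw₀ξ
    · exact FF_cstBelow
    · exact ⟨tτ_cstBelow α v h1 hs', tτ_cstBelow α v h2 ht'⟩
  | not φ ih => exact fun h => ih h
  | and φ ψ ih1 ih2 => exact fun ⟨h1, h2⟩ => ⟨ih1 h1, ih2 h2⟩
  | or φ ψ ih1 ih2 => exact fun ⟨h1, h2⟩ => ⟨ih1 h1, ih2 h2⟩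

theorem master {α ξ η : Ordinal} (hξl : Order.IsSuccLimit ξ) (hξη : ξ < η) (hle : le1 ξ η)
    (IH : ∀ b, b < η → ∀ a, (le1 a b ↔ le1 (α + 1 + a) (α + 1 + b)))
    (v z : ℕ → Ordinal) (hz : ∀ n, z n < η) :
    ∀ {φ : QF}, φ.CstBelow (α + 1 + ξ) →
      (φ.eval le1 (liftv α v z) ↔ (Tr α ξ v φ).eval le1 z) := by
  intro φ
  induction φ with
  | le s t =>
    rintro ⟨hs', ht'⟩
    show s.val (liftv α v z) ≤ t.val (liftv α v z) ↔ _
    by_cases hs : s.val v ≤ α <;> by_cases ht : t.val v ≤ α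
    · rw [val_lift_kept α v z hs, val_lift_kept α v z ht]
      simp only [Tr, if_pos hs, if_pos ht]
      by_cases h : s.val v ≤ t.val v
      · rw [if_pos h]; exact iff_of_true h (eval_TT _ _)
      · rw [if_neg h]; exact iff_of_false h (eval_FF _ _)
    · rw [val_lift_kept α v z hs, val_lift_moved α v z ht]
      simp only [Tr, if_pos hs, if_neg ht]
      exact iff_of_true (le_f hs) (eval_TT _ _)
    · rw [val_lift_moved α v z hs, val_lift_kept α v z ht]
      simp only [Tr, if_neg hs, if_pos ht]
      exact iff_of_false (not_le.mpr (lt_f ht)) (eval_FF _ _)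
    · rw [val_lift_moved α v z hs, val_lift_moved α v z ht]
      simp only [Tr, if_neg hs, if_neg ht]
      show _ ↔ (tτ α s).val z ≤ (tτ α t).val z
      exact add_le_add_iff_left (α + 1)
  | le1 s t =>
    rintro ⟨hs', ht'⟩
    show le1 (s.val (liftv α v z)) (t.val (liftv α v z)) ↔ _
    by_cases hs : s.val v ≤ α <;> by_cases ht : t.val v ≤ α
    · rw [val_lift_kept α v z hs, val_lift_kept α v z ht]
      simp only [Tr, if_pos hs, if_pos ht]
      by_cases h : le1 (s.val v) (t.val v)
      · rw [if_pos h]; exact iff_of_true h (eval_TT _ _)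
      · rw [if_neg h]; exact iff_of_false h (eval_FF _ _)
    · -- cross case
      rw [val_lift_kept α v z hs, val_lift_moved α v z ht]
      have hb : (tτ α t).val z < η := val_tt_lt α v z hz (le_of_lt hξη) ht ht'
      simp only [Tr, if_pos hs, if_neg ht]
      by_cases hall : ∀ w, w < ξ → le1 (s.val v) (α + 1 + w)
      · rw [if_pos hall]
        refine iff_of_true ?_ (eval_TT _ _)
        by_cases hbξ : (tτ α t).val z < ξ
        · exact hall _ hbξ
        · have hxfξ : le1 (s.val v) (α + 1 + ξ) := by
            refine le1_of_limit (Ordinal.isSuccLimit_add _ hξl) (lt_f hs) ?_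
            intro y hxy hy
            by_cases hyα : y ≤ α
            · have h0 : le1 (s.val v) (α + 1) := by
                have := hall 0 hξl.pos
                rwa [add_zero] at this
              exact le1_down h0 hxy (le_trans hyα (le_of_lt (lt_add_one α)))
            · have h1 : α + 1 + (y - (α + 1)) = y := sub_add' hyα
              have h2 : y - (α + 1) < ξ := by
                rw [← add_lt_add_iff_left (α + 1), h1]; exact hy
              rw [← h1]; exact hall _ h2
          have hξb : le1 ξ ((tτ α t).val z) :=
            le1_down hle (le_of_not_gt hbξ) (le_of_lt hb)
          exact le1_trans hxfξ ((IH _ hb ξ).mp hξb)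
      · rw [if_neg hall]
        push_neg at hall
        obtain ⟨w₀, hw₀ξ, hw₀⟩ := hall
        show le1 (s.val v) (α + 1 + (tτ α t).val z) ↔
          ¬ (sInf {w | ¬ le1 (s.val v) (α + 1 + w)} ≤ (tτ α t).val z)
        constructor
        · intro hx hWb
          have hWmem : sInf {w | ¬ le1 (s.val v) (α + 1 + w)} ∈
              {w | ¬ le1 (s.val v) (α + 1 + w)} := csInf_mem ⟨w₀, hw₀⟩
          exact hWmem (le1_down hx (le_f hs) (add_le_add_right hWb _))
        · intro hnWb
          by_contra hx
          exact hnWb (csInf_le' hx)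
    · rw [val_lift_moved α v z hs, val_lift_kept α v z ht]
      simp only [Tr, if_neg hs, if_pos ht]
      refine iff_of_false (fun h => ?_) (eval_FF _ _)
      exact absurd (le1_le h) (not_le.mpr (lt_f ht))
    · rw [val_lift_moved α v z hs, val_lift_moved α v z ht]
      have hb : (tτ α t).val z < η := val_tt_lt α v z hz (le_of_lt hξη) ht ht'
      simp only [Tr, if_neg hs, if_neg ht]
      show _ ↔ le1 ((tτ α s).val z) ((tτ α t).val z)
      exact (IH _ hb _).symm
  | not φ ih => exact fun h => not_congr (ih h)
  | and φ ψ ih1 ih2 => exact fun ⟨h1, h2⟩ => and_congr (ih1 h1) (ih2 h2)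
  | or φ ψ ih1 ih2 => exact fun ⟨h1, h2⟩ => or_congr (ih1 h1) (ih2 h2)

-- Part 4: reverse direction machinery and the main theorem
def hat (α : Ordinal) : Trm → Trm
  | .cst c => .cst (α + 1 + c)
  | .evar n => .evar n

def Hat (α : Ordinal) : QF → QF
  | .le s t => .le (hat α s) (hat α t)
  | .le1 s t => .le1 (hat α s) (hat α t)
  | .not φ => .not (Hat α φ)
  | .and φ ψ => .and (Hat α φ) (Hat α ψ)
  | .or φ ψ => .or (Hat α φ) (Hat α ψ)

theorem val_hat (α : Ordinal) (v : ℕ → Ordinal) :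
    ∀ t : Trm, (hat α t).val (fun n => α + 1 + v n) = α + 1 + t.val v
  | .cst _ => rfl
  | .evar _ => rfl

theorem hat_mv (α : Ordinal) : ∀ t : Trm, (hat α t).mv = t.mv
  | .cst _ => rfl
  | .evar _ => rfl

theorem Hat_mv (α : Ordinal) : ∀ φ : QF, (Hat α φ).mv = φ.mv
  | .le s t => by rw [Hat, QF.mv, QF.mv, hat_mv, hat_mv]
  | .le1 s t => by rw [Hat, QF.mv, QF.mv, hat_mv, hat_mv]
  | .not φ => by rw [Hat, QF.mv, QF.mv, Hat_mv α φ]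
  | .and φ ψ => by rw [Hat, QF.mv, QF.mv, Hat_mv α φ, Hat_mv α ψ]
  | .or φ ψ => by rw [Hat, QF.mv, QF.mv, Hat_mv α φ, Hat_mv α ψ]

theorem hat_cstBelow {α ξ : Ordinal} :
    ∀ {t : Trm}, t.CstBelow ξ → (hat α t).CstBelow (α + 1 + ξ)
  | .cst _, hc => (add_lt_add_iff_left (α + 1)).mpr hc
  | .evar _, _ => trivial

theorem Hat_cstBelow {α ξ : Ordinal} :
    ∀ {φ : QF}, φ.CstBelow ξ → (Hat α φ).CstBelow (α + 1 + ξ) := by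
  intro φ
  induction φ with
  | le s t => exact fun ⟨h1, h2⟩ => ⟨hat_cstBelow h1, hat_cstBelow h2⟩
  | le1 s t => exact fun ⟨h1, h2⟩ => ⟨hat_cstBelow h1, hat_cstBelow h2⟩
  | not φ ih => exact fun h => ih h
  | and φ ψ ih1 ih2 => exact fun ⟨h1, h2⟩ => ⟨ih1 h1, ih2 h2⟩
  | or φ ψ ih1 ih2 => exact fun ⟨h1, h2⟩ => ⟨ih1 h1, ih2 h2⟩

theorem eval_Hat {α η : Ordinal}
    (IH : ∀ b, b < η → ∀ a, (le1 a b ↔ le1 (α + 1 + a) (α + 1 + b)))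
    (v : ℕ → Ordinal) (hv : ∀ n, v n < η) :
    ∀ {φ : QF}, φ.CstBelow η →
      (φ.eval le1 v ↔ (Hat α φ).eval le1 (fun n => α + 1 + v n)) := by
  intro φ
  induction φ with
  | le s t =>
    rintro ⟨_, _⟩
    show s.val v ≤ t.val v ↔ (hat α s).val _ ≤ (hat α t).val _
    rw [val_hat, val_hat]
    exact (add_le_add_iff_left (α + 1)).symm
  | le1 s t =>
    rintro ⟨hs, ht⟩
    show le1 (s.val v) (t.val v) ↔ le1 ((hat α s).val _) ((hat α t).val _)
    rw [val_hat, val_hat]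
    exact IH (t.val v) (Trm.val_lt hv ht) (s.val v)
  | not φ ih => exact fun h => not_congr (ih h)
  | and φ ψ ih1 ih2 => exact fun ⟨h1, h2⟩ => and_congr (ih1 h1) (ih2 h2)
  | or φ ψ ih1 ih2 => exact fun ⟨h1, h2⟩ => or_congr (ih1 h1) (ih2 h2)

/-- Formula forcing variables `0..n` to be above `α`. -/
def Force (α : Ordinal) : ℕ → QF
  | 0 => .not (.le (.evar 0) (.cst α))
  | n + 1 => .and (Force α n) (.not (.le (.evar (n + 1)) (.cst α)))

theorem eval_Force {α : Ordinal} (r : Ordinal → Ordinal → Prop) (z : ℕ → Ordinal) :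
    ∀ n : ℕ, ((Force α n).eval r z ↔ ∀ m, m ≤ n → ¬ z m ≤ α)
  | 0 => by
    show ¬ (z 0 ≤ α) ↔ _
    constructor
    · intro h m hm
      rw [Nat.le_zero] at hm
      rw [hm]; exact h
    · intro h; exact h 0 le_rfl
  | n + 1 => by
    show (Force α n).eval r z ∧ ¬ (z (n + 1) ≤ α) ↔ _
    rw [eval_Force r z n]
    constructor
    · rintro ⟨h1, h2⟩ m hm
      rcases Nat.lt_succ_iff_lt_or_eq.mp (Nat.lt_succ_of_le hm) with h | h
      · exact h1 m (Nat.lt_succ_iff.mp h)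
      · rw [h]; exact h2
    · intro h
      exact ⟨fun m hm => h m (Nat.le_succ_of_le hm), h (n + 1) le_rfl⟩

theorem Force_cstBelow {α δ : Ordinal} (h : α < δ) : ∀ n, (Force α n).CstBelow δ
  | 0 => ⟨trivial, h⟩
  | n + 1 => ⟨Force_cstBelow h n, trivial, h⟩

/-- The main translation theorem, by induction on `η`. -/
theorem key (α : Ordinal) : ∀ η ξ : Ordinal, le1 ξ η ↔ le1 (α + 1 + ξ) (α + 1 + η) := by
  intro η
  induction η using Ordinal.induction with
  | h η IH =>
    intro ξ
    constructor
    · intro h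
      rcases (le1_le h).eq_or_lt with heq | hlt
      · rw [heq]; exact le1_refl _
      · have hξl : Order.IsSuccLimit ξ := isLimit_of_lt1 h hlt
        rw [le1_iff']
        refine ⟨add_le_add_right (le1_le h) _, ?_⟩
        rintro φ hφ ⟨v, hv, he⟩
        classical
        set u : ℕ → Ordinal := fun n => if v n ≤ α then 0 else v n - (α + 1) with hu_def
        have hu : ∀ n, u n < η := by
          intro n
          by_cases hn : v n ≤ α
          · simp only [hu_def, if_pos hn]
            exact lt_of_lt_of_le hξl.pos (le_of_lt hlt)
          · simp only [hu_def, if_neg hn]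
            rw [← add_lt_add_iff_left (α + 1), sub_add' hn]
            exact hv n
        have hlift : liftv α v u = v := by
          funext n
          by_cases hn : v n ≤ α
          · simp only [liftv, if_pos hn]
          · simp only [liftv, hu_def, if_neg hn]
            exact sub_add' hn
        have hm := master hξl hlt h IH v u hu hφ
        rw [hlift] at hm
        have hSatη : Sat' η (Tr α ξ v φ) := ⟨u, hu, hm.mp he⟩
        have hSatξ : Sat' ξ (Tr α ξ v φ) :=
          (((le1_iff ξ η).mp h).2 _ (Tr_cstBelow v hφ)).mpr hSatη
        obtain ⟨u', hu', he'⟩ := hSatξ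
        have hm2 := master hξl hlt h IH v u' (fun n => lt_trans (hu' n) hlt) hφ
        refine ⟨liftv α v u', ?_, hm2.mpr he'⟩
        intro n
        by_cases hn : v n ≤ α
        · simp only [liftv, if_pos hn]; exact lt_f hn
        · simp only [liftv, if_neg hn]
          exact (add_lt_add_iff_left (α + 1)).mpr (hu' n)
    · intro h
      have hle : ξ ≤ η := (add_le_add_iff_left (α + 1)).mp (le1_le h)
      rcases hle.eq_or_lt with heq | hlt
      · rw [heq]; exact le1_refl _
      · have hξpos : 0 < ξ := by
          have hfl : Order.IsSuccLimit (α + 1 + ξ) :=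
            isLimit_of_lt1 h ((add_lt_add_iff_left (α + 1)).mpr hlt)
          rcases eq_zero_or_pos ξ with h0 | h0
          · exfalso
            rw [h0, add_zero] at hfl
            have h2 := hfl.succ_lt (lt_add_one α)
            rw [Ordinal.add_one_eq_succ] at h2
            exact absurd h2 (lt_irrefl _)
          · exact h0
        rw [le1_iff']
        refine ⟨hle, ?_⟩
        rintro φ hφ ⟨v, hv, he⟩
        classical
        have hφη : φ.CstBelow η := QF.cstBelow_mono (le_of_lt hlt) hφ
        have hHat : (Hat α φ).eval le1 (fun n => α + 1 + v n) :=
          (eval_Hat IH v hv hφη).mp he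
        have hχ : (QF.and (Hat α φ) (Force α φ.mv)).CstBelow (α + 1 + ξ) :=
          ⟨Hat_cstBelow hφ, Force_cstBelow (lt_f le_rfl) φ.mv⟩
        have hSatfη : Sat' (α + 1 + η) (.and (Hat α φ) (Force α φ.mv)) := by
          refine ⟨fun n => α + 1 + v n,
            fun n => (add_lt_add_iff_left (α + 1)).mpr (hv n), hHat, ?_⟩
          rw [eval_Force]
          intro m _
          exact not_le.mpr (lt_f le_rfl)
        obtain ⟨w, hw, hwHat, hwForce⟩ := ((le1_iff' _ _).mp h).2 _ hχ hSatfη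
        rw [eval_Force] at hwForce
        set v' : ℕ → Ordinal := fun n => if n ≤ φ.mv then w n - (α + 1) else 0 with hv'def
        have hv'ξ : ∀ n, v' n < ξ := by
          intro n
          by_cases hn : n ≤ φ.mv
          · simp only [hv'def, if_pos hn]
            rw [← add_lt_add_iff_left (α + 1), sub_add' (hwForce n hn)]
            exact hw n
          · simp only [hv'def, if_neg hn]; exact hξpos
        have hagree : ∀ n, n ≤ (Hat α φ).mv → w n = α + 1 + v' n := by
          intro n hn
          rw [Hat_mv] at hn
          simp only [hv'def, if_pos hn]
          exact (sub_add' (hwForce n hn)).symm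
        have hwv' : (Hat α φ).eval le1 (fun n => α + 1 + v' n) :=
          (QF.eval_ext hagree).mp hwHat
        refine ⟨v', hv'ξ, ?_⟩
        exact (eval_Hat IH v' (fun n => lt_trans (hv'ξ n) hlt) hφη).mpr hwv'

end R1


/-- In `R₁`, the class of all ordinals is isomorphic to `[α+1, ∞)` via
translation. -/
theorem translation_iso (α ξ η : Ordinal) :
    R1.le1 ξ η ↔ R1.le1 (α + 1 + ξ) (α + 1 + η) := R1.key α η ξ

end
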